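/- Let M be a matroid on a ground set containing distinct elements e_0, e_1, e_2, e_3 such that {e_0, e_1, e_3} and {e_0, e_2, e_3} are circuits and M has no circuits of size ≤ 2. Fix any linear order on the ground set. Then the minimal broken circuits of M with respect to this order are not pairwise disjoint. -/

import Mathlib

variable {α : Type}

/-- A circuit of a matroid: a minimal dependent set. -/
def MatCircuit (M : Matroid α) (C : Set α) : Prop := Minimal M.Dep C

/-- A broken circuit with respect to a linear order on the ground set: a circuit with its
least element removed. -/
def BrokenCircuit [LinearOrder α] (M : Matroid α) (D : Set α) : Prop :=
  ∃ (C : Set α) (m : α), MatCircuit M C ∧ m ∈ C ∧ (∀ x ∈ C, m ≤ x) ∧ D = C \ {m}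

/-- A minimal broken circuit: one that does not properly contain another broken circuit. -/
def MinBrokenCircuit [LinearOrder α] (M : Matroid α) (D : Set α) : Prop :=
  BrokenCircuit M D ∧ ∀ D', BrokenCircuit M D' → D' ⊆ D → D' = D

/-- Every finite dependent set contains a circuit. -/
lemma exists_circuit_subset (M : Matroid α) : ∀ D : Set α, M.Dep D → D.Finite →
    ∃ C ⊆ D, MatCircuit M C := by
  suffices h : ∀ n : ℕ, ∀ D : Set α, M.Dep D → D.Finite → D.ncard = n → ∃ C ⊆ D, MatCircuit M C by
    intro D hD hfin
    exact h D.ncard D hD hfin rfl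
  intro n
  induction n using Nat.strong_induction_on with
  | _ n ih =>
    intro D hD hfin hcard
    by_cases h : ∃ D', D' ⊂ D ∧ M.Dep D'
    · obtain ⟨D', hss, hD'⟩ := h
      obtain ⟨C, hCD', hC⟩ := ih D'.ncard (hcard ▸ Set.ncard_lt_ncard hss hfin) D' hD'
        (hfin.subset hss.subset) rfl
      exact ⟨C, hCD'.trans hss.subset, hC⟩
    · push_neg at h
      refine ⟨D, subset_rfl, hD, ?_⟩
      intro y hy hyD
      by_contra hne
      exact (h y ⟨hyD, fun hsub => hne hsub⟩) hy

/-- A broken circuit of cardinality two is a minimal broken circuit. -/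
lemma minBC_of_card_two [LinearOrder α] (M : Matroid α)
    (hsmall : ∀ C, MatCircuit M C → C.Finite → 2 < C.ncard)
    {D : Set α} (hD : BrokenCircuit M D) (hfin : D.Finite) (hcard : D.ncard = 2) :
    MinBrokenCircuit M D := by
  refine ⟨hD, ?_⟩
  rintro D' ⟨C', m', hC', hm', -, rfl⟩ hsub
  have hfin' : (C' \ {m'}).Finite := hfin.subset hsub
  have hCfin : C'.Finite := by
    have : C' ⊆ insert m' (C' \ {m'}) := by
      intro x hx
      by_cases hxm : x = m'
      · exact hxm ▸ Set.mem_insert _ _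
      · exact Set.mem_insert_of_mem _ ⟨hx, hxm⟩
    exact (hfin'.insert m').subset this
  have h3 : 2 < C'.ncard := hsmall C' hC' hCfin
  have hdc : (C' \ {m'}).ncard = C'.ncard - 1 := by
    rw [Set.ncard_diff_singleton_of_mem hm']
  have : 2 ≤ (C' \ {m'}).ncard := by omega
  exact Set.eq_of_subset_of_ncard_le hsub (hcard ▸ this) hfin

theorem stmt9 [LinearOrder α] (M : Matroid α) (e0 e1 e2 e3 : α)
    (h01 : e0 ≠ e1) (h02 : e0 ≠ e2) (h03 : e0 ≠ e3)
    (h12 : e1 ≠ e2) (h13 : e1 ≠ e3) (h23 : e2 ≠ e3)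
    (hC1 : MatCircuit M {e0, e1, e3}) (hC2 : MatCircuit M {e0, e2, e3})
    (hsmall : ∀ C, MatCircuit M C → C.Finite → 2 < C.ncard) :
    ¬({D | MinBrokenCircuit M D}.Pairwise Disjoint) := by
  intro hpw
  have hE1 : ({e0, e1, e3} : Set α) ⊆ M.E := hC1.1.2
  have hE2 : ({e0, e2, e3} : Set α) ⊆ M.E := hC2.1.2
  have he0 : e0 ∈ M.E := hE1 (by simp)
  have he1 : e1 ∈ M.E := hE1 (by simp)
  have he2 : e2 ∈ M.E := hE2 (by simp)
  have he3 : e3 ∈ M.E := hE1 (by simp)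
  -- the minimum of each circuit
  set m1 := min e0 (min e1 e3) with hm1def
  set m2 := min e0 (min e2 e3) with hm2def
  have hm1mem : m1 ∈ ({e0, e1, e3} : Set α) := by
    rcases min_cases e0 (min e1 e3) with ⟨h, -⟩ | ⟨h, -⟩ <;> rw [hm1def, h]
    · simp
    · rcases min_cases e1 e3 with ⟨h', -⟩ | ⟨h', -⟩ <;> rw [h'] <;> simp
  have hm2mem : m2 ∈ ({e0, e2, e3} : Set α) := by
    rcases min_cases e0 (min e2 e3) with ⟨h, -⟩ | ⟨h, -⟩ <;> rw [hm2def, h]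
    · simp
    · rcases min_cases e2 e3 with ⟨h', -⟩ | ⟨h', -⟩ <;> rw [h'] <;> simp
  have hm1le : ∀ x ∈ ({e0, e1, e3} : Set α), m1 ≤ x := by
    rintro x (rfl | rfl | rfl)
    · exact min_le_left _ _
    · exact le_trans (min_le_right _ _) (min_le_left _ _)
    · exact le_trans (min_le_right _ _) (min_le_right _ _)
  have hm2le : ∀ x ∈ ({e0, e2, e3} : Set α), m2 ≤ x := by
    rintro x (rfl | rfl | rfl)
    · exact min_le_left _ _
    · exact le_trans (min_le_right _ _) (min_le_left _ _)
    · exact le_trans (min_le_right _ _) (min_le_right _ _)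
  set D1 := ({e0, e1, e3} : Set α) \ {m1} with hD1def
  set D2 := ({e0, e2, e3} : Set α) \ {m2} with hD2def
  have hfin1 : ({e0, e1, e3} : Set α).Finite :=
    ((Set.finite_singleton e3).insert e1).insert e0
  have hfin2 : ({e0, e2, e3} : Set α).Finite :=
    ((Set.finite_singleton e3).insert e2).insert e0
  have hc1card : ({e0, e1, e3} : Set α).ncard = 3 := by
    rw [Set.ncard_insert_of_notMem (by simp [h01, h03]) ((Set.finite_singleton e3).insert e1),
      Set.ncard_insert_of_notMem (by simp [h13]) (Set.finite_singleton e3), Set.ncard_singleton]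
  have hc2card : ({e0, e2, e3} : Set α).ncard = 3 := by
    rw [Set.ncard_insert_of_notMem (by simp [h02, h03]) ((Set.finite_singleton e3).insert e2),
      Set.ncard_insert_of_notMem (by simp [h23]) (Set.finite_singleton e3), Set.ncard_singleton]
  have hD1card : D1.ncard = 2 := by
    rw [hD1def, Set.ncard_diff_singleton_of_mem hm1mem, hc1card]
  have hD2card : D2.ncard = 2 := by
    rw [hD2def, Set.ncard_diff_singleton_of_mem hm2mem, hc2card]
  have hB1 : BrokenCircuit M D1 := ⟨_, m1, hC1, hm1mem, hm1le, rfl⟩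
  have hB2 : BrokenCircuit M D2 := ⟨_, m2, hC2, hm2mem, hm2le, rfl⟩
  have hM1 : MinBrokenCircuit M D1 :=
    minBC_of_card_two M hsmall hB1 (hfin1.subset Set.diff_subset) hD1card
  have hM2 : MinBrokenCircuit M D2 :=
    minBC_of_card_two M hsmall hB2 (hfin2.subset Set.diff_subset) hD2card
  have key : ∀ x D D', x ∈ D → x ∈ D' → D ≠ D' → MinBrokenCircuit M D →
      MinBrokenCircuit M D' → False := by
    intro x D D' hx hx' hne hD hD'
    exact Set.disjoint_left.mp (hpw hD hD' hne) hx hx'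
  have hm1cases : m1 = e0 ∨ m1 = e1 ∨ m1 = e3 := by
    simpa [Set.mem_insert_iff, Set.mem_singleton_iff] using hm1mem
  have hm2cases : m2 = e0 ∨ m2 = e2 ∨ m2 = e3 := by
    simpa [Set.mem_insert_iff, Set.mem_singleton_iff] using hm2mem
  rcases hm1cases with hm1e | hm1e | hm1e
  · -- m1 = e0 : D1 ⊇ {e1, e3}; then m2 ≠ e3
    have h0le3 : e0 ≤ e3 := by rw [← hm1e]; exact hm1le e3 (by simp)
    have hm2ne3 : m2 ≠ e3 := by
      intro h
      exact h03 (le_antisymm h0le3 (by rw [← h]; exact hm2le e0 (by simp)))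
    have hx1 : e3 ∈ D1 := by
      refine ⟨by simp, ?_⟩
      rw [hm1e]
      simp only [Set.mem_singleton_iff]
      exact Ne.symm h03
    have hx2 : e3 ∈ D2 := by
      refine ⟨by simp, ?_⟩
      simp only [Set.mem_singleton_iff]
      exact Ne.symm hm2ne3
    have hne : D1 ≠ D2 := by
      intro h
      have h1 : e1 ∈ D2 := by
        rw [← h]
        refine ⟨by simp, ?_⟩
        rw [hm1e]
        simp only [Set.mem_singleton_iff]
        exact Ne.symm h01
      rcases h1.1 with h' | h' | h'
      · exact h01 h'.symm
      · exact h12 h'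
      · exact h13 h'
    exact key e3 D1 D2 hx1 hx2 hne hM1 hM2
  rotate_left
  · -- m1 = e3 : D1 ⊇ {e0, e1}; then m2 ≠ e0
    have h3le0 : e3 ≤ e0 := by rw [← hm1e]; exact hm1le e0 (by simp)
    have hm2ne0 : m2 ≠ e0 := by
      intro h
      exact h03 (le_antisymm (by rw [← h]; exact hm2le e3 (by simp)) h3le0)
    have hx1 : e0 ∈ D1 := by
      refine ⟨by simp, ?_⟩
      rw [hm1e]
      simp only [Set.mem_singleton_iff]
      exact h03
    have hx2 : e0 ∈ D2 := by
      refine ⟨by simp, ?_⟩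
      simp only [Set.mem_singleton_iff]
      exact fun h => hm2ne0 h.symm
    have hne : D1 ≠ D2 := by
      intro h
      have h1 : e1 ∈ D2 := by
        rw [← h]
        refine ⟨by simp, ?_⟩
        rw [hm1e]
        simp only [Set.mem_singleton_iff]
        exact h13
      rcases h1.1 with h' | h' | h'
      · exact h01 h'.symm
      · exact h12 h'
      · exact h13 h'
    exact key e0 D1 D2 hx1 hx2 hne hM1 hM2
  · -- m1 = e1
    rcases hm2cases with hm2e | hm2e | hm2e
    · -- m2 = e0 : e3 ∈ D1 ∩ D2, D1 ≠ D2 via e2 ∈ D2 \ D1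
      have hx1 : e3 ∈ D1 := by
        refine ⟨by simp, ?_⟩
        rw [hm1e]
        simp only [Set.mem_singleton_iff]
        exact Ne.symm h13
      have hx2 : e3 ∈ D2 := by
        refine ⟨by simp, ?_⟩
        rw [hm2e]
        simp only [Set.mem_singleton_iff]
        exact Ne.symm h03
      have hne : D1 ≠ D2 := by
        intro h
        have h2 : e2 ∈ D1 := by
          rw [h]
          refine ⟨by simp, ?_⟩
          rw [hm2e]
          simp only [Set.mem_singleton_iff]
          exact Ne.symm h02
        rcases h2.1 with h' | h' | h'
        · exact h02 h'.symm
        · exact h12 h'.symm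
        · exact h23 h'
      exact key e3 D1 D2 hx1 hx2 hne hM1 hM2
    rotate_left
    · -- m2 = e3 : e0 ∈ D1 ∩ D2
      have hx1 : e0 ∈ D1 := by
        refine ⟨by simp, ?_⟩
        rw [hm1e]
        simp only [Set.mem_singleton_iff]
        exact h01
      have hx2 : e0 ∈ D2 := by
        refine ⟨by simp, ?_⟩
        rw [hm2e]
        simp only [Set.mem_singleton_iff]
        exact h03
      have hne : D1 ≠ D2 := by
        intro h
        have h2 : e2 ∈ D1 := by
          rw [h]
          refine ⟨by simp, ?_⟩
          rw [hm2e]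
          simp only [Set.mem_singleton_iff]
          exact h23
        rcases h2.1 with h' | h' | h'
        · exact h02 h'.symm
        · exact h12 h'.symm
        · exact h23 h'
      exact key e0 D1 D2 hx1 hx2 hne hM1 hM2
    · -- hard case: m1 = e1, m2 = e2, D1 = D2 = {e0, e3}
      have hfin03 : (insert e3 {e0} : Set α).Finite := (Set.finite_singleton e0).insert e3
      have hdep3 : M.Dep {e0, e1, e2} := by
        refine ⟨?_, by intro x hx; rcases hx with rfl | rfl | rfl <;> assumption⟩
        intro hI
        have hI01 : M.Indep {e0, e1} :=
          hI.subset (by intro x hx; rcases hx with rfl | rfl <;> simp)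
        have hI02 : M.Indep {e0, e2} :=
          hI.subset (by intro x hx; rcases hx with rfl | rfl <;> simp)
        have h3cl1 : e3 ∈ M.closure {e0, e1} := by
          have hdep : M.Dep (insert e3 {e0, e1}) := by
            have heq : ({e0, e1, e3} : Set α) = insert e3 {e0, e1} := by
              ext x; simp; tauto
            exact heq ▸ hC1.1
          exact ((hI01.insert_dep_iff).mp hdep).1
        have h3cl2 : e3 ∈ M.closure {e0, e2} := by
          have hdep : M.Dep (insert e3 {e0, e2}) := by
            have heq : ({e0, e2, e3} : Set α) = insert e3 {e0, e2} := by
              ext x; simp; tauto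
            exact heq ▸ hC2.1
          exact ((hI02.insert_dep_iff).mp hdep).1
        have hunion : M.Indep ({e0, e1} ∪ {e0, e2}) := by
          have heq : ({e0, e1} ∪ {e0, e2} : Set α) = {e0, e1, e2} := by
            ext x; simp; tauto
          exact heq ▸ hI
        have hint : ({e0, e1} ∩ {e0, e2} : Set α) = {e0} := by
          ext x; simp; constructor
          · rintro ⟨rfl | rfl, h⟩
            · rfl
            · rcases h with rfl | rfl
              · exact absurd rfl h01
              · exact absurd rfl h12
          · rintro rfl; simp
        have h3cl0 : e3 ∈ M.closure {e0} := by
          have hcl := hunion.closure_inter_eq_inter_closure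
          rw [hint] at hcl
          rw [hcl]
          exact ⟨h3cl1, h3cl2⟩
        have hI0 : M.Indep {e0} := hI.subset (by simp)
        have hdep03 : M.Dep (insert e3 {e0}) :=
          hI0.insert_dep_iff.mpr ⟨h3cl0, by simpa using fun h => h03 h.symm⟩
        obtain ⟨C, hCsub, hC⟩ := exists_circuit_subset M _ hdep03 hfin03
        have hgt := hsmall C hC (hfin03.subset hCsub)
        have hle : C.ncard ≤ 2 := by
          calc C.ncard ≤ (insert e3 {e0} : Set α).ncard :=
                Set.ncard_le_ncard hCsub hfin03
            _ ≤ 2 := by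
                rw [Set.ncard_insert_of_notMem (by simpa using fun h => h03 h.symm)
                  (Set.finite_singleton e0), Set.ncard_singleton]
        omega
      have hfin3 : ({e0, e1, e2} : Set α).Finite :=
        ((Set.finite_singleton e2).insert e1).insert e0
      have hc3card : ({e0, e1, e2} : Set α).ncard = 3 := by
        rw [Set.ncard_insert_of_notMem (by simp [h01, h02])
            ((Set.finite_singleton e2).insert e1),
          Set.ncard_insert_of_notMem (by simp [h12]) (Set.finite_singleton e2),
          Set.ncard_singleton]
      have hC3 : MatCircuit M {e0, e1, e2} := by
        refine ⟨hdep3, ?_⟩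
        intro y hy hyC
        have hyfin : y.Finite := hfin3.subset hyC
        obtain ⟨C, hCy, hC⟩ := exists_circuit_subset M y hy hyfin
        have h2 := hsmall C hC (hyfin.subset hCy)
        have hCy3 : C ⊆ ({e0, e1, e2} : Set α) := hCy.trans hyC
        have heq : C = ({e0, e1, e2} : Set α) := by
          refine Set.eq_of_subset_of_ncard_le hCy3 ?_ hfin3
          rw [hc3card]; omega
        calc ({e0, e1, e2} : Set α) = C := heq.symm
          _ ⊆ y := hCy
      set m3 := min e0 (min e1 e2) with hm3def
      have hm3mem : m3 ∈ ({e0, e1, e2} : Set α) := by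
        rcases min_cases e0 (min e1 e2) with ⟨h, -⟩ | ⟨h, -⟩ <;> rw [hm3def, h]
        · simp
        · rcases min_cases e1 e2 with ⟨h', -⟩ | ⟨h', -⟩ <;> rw [h'] <;> simp
      have hm3le : ∀ x ∈ ({e0, e1, e2} : Set α), m3 ≤ x := by
        rintro x (rfl | rfl | rfl)
        · exact min_le_left _ _
        · exact le_trans (min_le_right _ _) (min_le_left _ _)
        · exact le_trans (min_le_right _ _) (min_le_right _ _)
      set D3 := ({e0, e1, e2} : Set α) \ {m3} with hD3def
      have hD3card : D3.ncard = 2 := by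
        rw [hD3def, Set.ncard_diff_singleton_of_mem hm3mem, hc3card]
      have hB3 : BrokenCircuit M D3 := ⟨_, m3, hC3, hm3mem, hm3le, rfl⟩
      have hM3 : MinBrokenCircuit M D3 :=
        minBC_of_card_two M hsmall hB3 (hfin3.subset Set.diff_subset) hD3card
      have h1le0 : e1 ≤ e0 := by rw [← hm1e]; exact hm1le e0 (by simp)
      have hm3ne0 : m3 ≠ e0 := by
        intro h
        exact h01 (le_antisymm (by rw [← h]; exact hm3le e1 (by simp)) h1le0)
      have hx1 : e0 ∈ D1 := by
        refine ⟨by simp, ?_⟩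
        rw [hm1e]
        simp only [Set.mem_singleton_iff]
        exact h01
      have hx3 : e0 ∈ D3 := by
        refine ⟨by simp, ?_⟩
        simp only [Set.mem_singleton_iff]
        exact fun h => hm3ne0 h.symm
      have hne : D1 ≠ D3 := by
        intro h
        have h3 : e3 ∈ D3 := by
          rw [← h]
          refine ⟨by simp, ?_⟩
          rw [hm1e]
          simp only [Set.mem_singleton_iff]
          exact Ne.symm h13
        rcases h3.1 with h' | h' | h'
        · exact h03 h'.symm
        · exact h13 h'.symm
        · exact h23 h'.symm
      exact key e0 D1 D3 hx1 hx3 hne hM1 hM3
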